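/- Let L_1,...,L_n be independent real random variables with |L_i| ≤ ℓ, and let Z_i = (L_i/p_i)·B_i where B_i ~ Bernoulli(p_i) with p_i > 0 is independent of everything else. Let L = Σ L_i, Z = Σ Z_i, μ = E[L], p = min_i p_i, and Γ = Z/μ − 1. Then for any γ ∈ [0,1], Pr[|Γ| ≥ γ] ≤ 4·exp(−p·μ²·γ² / (5ℓ²n)). -/

import Mathlib

open MeasureTheory ProbabilityTheory

lemma exp_quad_bound {x : ℝ} (hx : |x| ≤ 1) : Real.exp x ≤ 1 + x + x ^ 2 := by
  have h := Real.exp_bound hx (n := 2) (by norm_num)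
  have hs : ∑ i ∈ Finset.range 2, x ^ i / (Nat.factorial i) = 1 + x := by
    simp [Finset.sum_range_succ]
  rw [hs] at h
  have h2 := (abs_le.mp h).2
  have h3 : |x| ^ 2 = x ^ 2 := sq_abs x
  rw [h3] at h2
  norm_num [Nat.factorial] at h2
  nlinarith [sq_nonneg x]

lemma mgf_le_of_bound {Ω : Type*} [MeasurableSpace Ω] (μ : Measure Ω) [IsProbabilityMeasure μ]
    {X : Ω → ℝ} {M v t : ℝ}
    (hmeas : Measurable X)
    (hX : Integrable X μ) (hX2 : Integrable (fun ω => X ω ^ 2) μ)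
    (hmean : ∫ ω, X ω ∂μ = 0) (hbdd : ∀ᵐ ω ∂μ, |X ω| ≤ M)
    (hv : ∫ ω, X ω ^ 2 ∂μ ≤ v) (hvnn : 0 ≤ v)
    (ht : |t| * M ≤ 1) : mgf X μ t ≤ Real.exp (v * t ^ 2) := by
  have hae : ∀ᵐ ω ∂μ, Real.exp (t * X ω) ≤ 1 + t * X ω + t ^ 2 * X ω ^ 2 := by
    filter_upwards [hbdd] with ω hω
    have habs : |t * X ω| ≤ 1 := by
      rw [abs_mul]
      calc |t| * |X ω| ≤ |t| * M := mul_le_mul_of_nonneg_left hω (abs_nonneg t)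
        _ ≤ 1 := ht
    calc Real.exp (t * X ω) ≤ 1 + t * X ω + (t * X ω) ^ 2 := exp_quad_bound habs
      _ = 1 + t * X ω + t ^ 2 * X ω ^ 2 := by ring
  have hintexp : Integrable (fun ω => Real.exp (t * X ω)) μ := by
    refine Integrable.mono' (integrable_const (Real.exp 1)) ((hmeas.const_mul t).exp.aestronglyMeasurable) ?_
    filter_upwards [hbdd] with ω hω
    rw [Real.norm_eq_abs, abs_of_pos (Real.exp_pos _)]
    apply Real.exp_le_exp.mpr
    calc t * X ω ≤ |t * X ω| := le_abs_self _
      _ = |t| * |X ω| := abs_mul _ _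
      _ ≤ |t| * M := mul_le_mul_of_nonneg_left hω (abs_nonneg t)
      _ ≤ 1 := ht
  have hintrhs : Integrable (fun ω => 1 + t * X ω + t ^ 2 * X ω ^ 2) μ :=
    ((integrable_const 1).add (hX.const_mul t)).add (hX2.const_mul (t ^ 2))
  calc mgf X μ t = ∫ ω, Real.exp (t * X ω) ∂μ := rfl
    _ ≤ ∫ ω, (1 + t * X ω + t ^ 2 * X ω ^ 2) ∂μ := integral_mono_ae hintexp hintrhs hae
    _ = (∫ ω, (1 + t * X ω) ∂μ) + ∫ ω, t ^ 2 * X ω ^ 2 ∂μ :=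
        integral_add ((integrable_const 1).add (hX.const_mul t)) (hX2.const_mul (t ^ 2))
    _ = 1 + t * ∫ ω, X ω ∂μ + t ^ 2 * ∫ ω, X ω ^ 2 ∂μ := by
        rw [integral_add (integrable_const 1) (hX.const_mul t), integral_const,
          integral_const_mul, integral_const_mul]
        simp
    _ = 1 + t ^ 2 * ∫ ω, X ω ^ 2 ∂μ := by rw [hmean]; ring
    _ ≤ 1 + v * t ^ 2 := by nlinarith [sq_nonneg t]
    _ ≤ Real.exp (v * t ^ 2) := by
        have := Real.add_one_le_exp (v * t ^ 2); linarith

set_option maxHeartbeats 1000000 in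
/-- Concentration for sums of independently "sub-sampled" bounded random variables:
if `|L i| ≤ ℓ`, `Z i = (L i / p i) · B i` with `B i ~ Bernoulli (p i)` independent of
`L i`, the pairs `(L i, B i)` are mutually independent, `μL = E[∑ L i] > 0`,
`pmin = min_i p i`, and `Γ = (∑ Z i)/μL − 1`, then for every `γ ∈ [0,1]`,
`Pr[|Γ| ≥ γ] ≤ 4 exp(− pmin μL² γ² / (5 ℓ² n))`. -/
theorem subsampled_sum_concentration
    {Ω : Type*} {mΩ : MeasurableSpace Ω} (μ : Measure Ω) [IsProbabilityMeasure μ]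
    (n : ℕ) (L B : Fin n → Ω → ℝ) (p : Fin n → ℝ) (ℓ : ℝ)
    (hmeasL : ∀ i, Measurable (L i)) (hmeasB : ∀ i, Measurable (B i))
    (hp : ∀ i, 0 < p i)
    (hℓ : ∀ i, ∀ᵐ ω ∂μ, |L i ω| ≤ ℓ)
    (hB01 : ∀ i, ∀ᵐ ω ∂μ, B i ω = 0 ∨ B i ω = 1)
    (hBp : ∀ i, μ {ω | B i ω = 1} = ENNReal.ofReal (p i))
    (hindep : iIndepFun
      (fun i ω => (L i ω, B i ω)) μ)
    (hLB : ∀ i, IndepFun (L i) (B i) μ)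
    (pmin μL : ℝ)
    (hpmin : IsLeast (Set.range p) pmin)
    (hμL : μL = ∫ ω, ∑ i, L i ω ∂μ) (hμLpos : 0 < μL)
    (γ : ℝ) (hγ : γ ∈ Set.Icc (0:ℝ) 1) :
    μ {ω | γ ≤ |(∑ i, (L i ω / p i) * B i ω) / μL - 1|} ≤
      ENNReal.ofReal (4 * Real.exp (-(pmin * μL ^ 2 * γ ^ 2) / (5 * ℓ ^ 2 * n))) := by
  classical
  obtain ⟨hγ0, hγ1⟩ := hγ
  -- n ≠ 0
  rcases Nat.eq_zero_or_pos n with hn0 | hnpos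
  · exfalso
    subst hn0
    simp only [Finset.univ_eq_empty, Finset.sum_empty, integral_const, smul_eq_mul,
      mul_zero, measure_univ, ENNReal.toReal_one, one_mul] at hμL
    linarith
  have hnR : (0:ℝ) < n := by exact_mod_cast hnpos
  -- pmin facts
  obtain ⟨⟨i0, hi0⟩, hlb⟩ := hpmin
  have hpminpos : 0 < pmin := hi0 ▸ hp i0
  have hple : ∀ i, pmin ≤ p i := fun i => hlb ⟨i, rfl⟩
  have hpone : ∀ i, p i ≤ 1 := by
    intro i
    have h1 : μ {ω | B i ω = 1} ≤ 1 := prob_le_one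
    rw [hBp i] at h1
    exact_mod_cast (ENNReal.ofReal_le_one).mp h1
  have hpminone : pmin ≤ 1 := hi0 ▸ hpone i0
  -- integrability of L
  have hLint : ∀ i, Integrable (L i) μ := fun i =>
    Integrable.mono' (integrable_const ℓ) (hmeasL i).aestronglyMeasurable
      (by filter_upwards [hℓ i] with ω h; rwa [Real.norm_eq_abs])
  -- μL ≤ n ℓ
  have hμLle : μL ≤ n * ℓ := by
    rw [hμL]
    have hae : ∀ᵐ ω ∂μ, (∑ i, L i ω) ≤ (n : ℝ) * ℓ := by
      have h := ae_all_iff.mpr hℓ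
      filter_upwards [h] with ω hω
      calc (∑ i, L i ω) ≤ ∑ _i : Fin n, ℓ :=
            Finset.sum_le_sum fun i _ => (abs_le.mp (hω i)).2
        _ = (n : ℝ) * ℓ := by rw [Finset.sum_const, Finset.card_univ, Fintype.card_fin]; simp
    calc ∫ ω, ∑ i, L i ω ∂μ ≤ ∫ _ω, (n : ℝ) * ℓ ∂μ :=
          integral_mono_ae (integrable_finset_sum _ fun i _ => hLint i) (integrable_const _) hae
      _ = (n : ℝ) * ℓ := by simp
  have hℓpos : 0 < ℓ := by nlinarith
  -- definitions
  set m : Fin n → ℝ := fun i => ∫ ω, L i ω ∂μ with hmdef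
  set Z : Fin n → Ω → ℝ := fun i ω => L i ω / p i * B i ω with hZdef
  set X : Fin n → Ω → ℝ := fun i ω => Z i ω - m i with hXdef
  have hsum_m : ∑ i, m i = μL := by
    rw [hμL, integral_finset_sum _ fun i _ => hLint i]
  have hmeasZ : ∀ i, Measurable (Z i) := fun i => ((hmeasL i).div_const _).mul (hmeasB i)
  have hmeasX : ∀ i, Measurable (X i) := fun i => (hmeasZ i).sub measurable_const
  -- B facts
  have hBint : ∀ i, Integrable (B i) μ := fun i =>
    Integrable.mono' (integrable_const 1) (hmeasB i).aestronglyMeasurable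
      (by filter_upwards [hB01 i] with ω h
          rcases h with h | h <;> simp [Real.norm_eq_abs, h])
  have hEB : ∀ i, ∫ ω, B i ω ∂μ = p i := by
    intro i
    have hset : MeasurableSet {ω | B i ω = 1} := (hmeasB i) (measurableSet_singleton 1)
    have hae : B i =ᵐ[μ] Set.indicator {ω | B i ω = 1} (fun _ => (1:ℝ)) := by
      filter_upwards [hB01 i] with ω h
      rcases h with h | h <;> simp [Set.indicator_apply, Set.mem_setOf_eq, h]
    rw [integral_congr_ae hae, integral_indicator_const _ hset, measureReal_def, hBp i,
      ENNReal.toReal_ofReal (hp i).le, smul_eq_mul, mul_one]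
  -- bounds on Z, m, X
  have hZbd : ∀ i, ∀ᵐ ω ∂μ, |Z i ω| ≤ ℓ / pmin := by
    intro i
    filter_upwards [hℓ i, hB01 i] with ω hL hB
    rcases hB with h | h
    · simp only [hZdef, h, mul_zero, abs_zero]
      positivity
    · simp only [hZdef, h, mul_one, abs_div, abs_of_pos (hp i)]
      exact div_le_div₀ hℓpos.le hL hpminpos (hple i)
  have hZint : ∀ i, Integrable (Z i) μ := fun i =>
    Integrable.mono' (integrable_const (ℓ / pmin)) (hmeasZ i).aestronglyMeasurable
      (by filter_upwards [hZbd i] with ω h; rwa [Real.norm_eq_abs])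
  have hmbd : ∀ i, |m i| ≤ ℓ := by
    intro i
    have h1 : ‖∫ ω, L i ω ∂μ‖ ≤ ∫ ω, ‖L i ω‖ ∂μ := norm_integral_le_integral_norm _
    have h2 : ∫ ω, ‖L i ω‖ ∂μ ≤ ∫ _ω, ℓ ∂μ :=
      integral_mono_ae (hLint i).norm (integrable_const _)
        (by filter_upwards [hℓ i] with ω h; rwa [Real.norm_eq_abs])
    simp only [Real.norm_eq_abs] at h1
    rw [hmdef]
    simpa using h1.trans h2
  have hℓle : ℓ ≤ ℓ / pmin := by
    rw [le_div_iff₀ hpminpos]; nlinarith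
  have hXbd : ∀ i, ∀ᵐ ω ∂μ, |X i ω| ≤ 2 * ℓ / pmin := by
    intro i
    filter_upwards [hZbd i] with ω h
    calc |X i ω| = |Z i ω - m i| := by rw [hXdef]
      _ ≤ |Z i ω| + |m i| := abs_sub _ _
      _ ≤ ℓ / pmin + ℓ := add_le_add h (hmbd i)
      _ ≤ 2 * ℓ / pmin := by
          have h2 : 2 * ℓ / pmin = ℓ / pmin + ℓ / pmin := by ring
          rw [h2]; linarith [hℓle]
  have hXint : ∀ i, Integrable (X i) μ := fun i => (hZint i).sub (integrable_const _)
  have hX2int : ∀ i, Integrable (fun ω => X i ω ^ 2) μ := by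
    intro i
    refine Integrable.mono' (integrable_const ((2 * ℓ / pmin) ^ 2))
      ((hmeasX i).pow_const 2).aestronglyMeasurable ?_
    filter_upwards [hXbd i] with ω h
    rw [Real.norm_eq_abs, abs_pow]
    gcongr
  -- mean of X is 0
  have hEZ : ∀ i, ∫ ω, Z i ω ∂μ = m i := by
    intro i
    have hLBint : ∫ ω, L i ω * B i ω ∂μ = m i * p i := by
      have h := (hLB i).integral_mul_eq_mul_integral (hLint i).aestronglyMeasurable (hBint i).aestronglyMeasurable
      calc ∫ ω, L i ω * B i ω ∂μ = integral μ (L i * B i) := rfl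
        _ = integral μ (L i) * integral μ (B i) := h
        _ = m i * p i := by rw [hmdef, ← hEB i]
    calc ∫ ω, Z i ω ∂μ = ∫ ω, (p i)⁻¹ * (L i ω * B i ω) ∂μ := by
          apply integral_congr_ae
          filter_upwards with ω
          rw [hZdef]
          field_simp
      _ = (p i)⁻¹ * ∫ ω, L i ω * B i ω ∂μ := integral_const_mul _ _
      _ = (p i)⁻¹ * (m i * p i) := by rw [hLBint]
      _ = m i := by rw [mul_comm (m i) (p i), ← mul_assoc, inv_mul_cancel₀ (hp i).ne', one_mul]
  have hEX : ∀ i, ∫ ω, X i ω ∂μ = 0 := by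
    intro i
    rw [hXdef]
    simp only
    rw [integral_sub (hZint i) (integrable_const _), hEZ i, integral_const]
    simp
  -- integrability of L^2, Z^2
  have hL2int : ∀ i, Integrable (fun ω => L i ω ^ 2) μ := by
    intro i
    refine Integrable.mono' (integrable_const (ℓ ^ 2))
      ((hmeasL i).pow_const 2).aestronglyMeasurable ?_
    filter_upwards [hℓ i] with ω h
    rw [Real.norm_eq_abs, abs_pow]
    gcongr
  have hZ2int : ∀ i, Integrable (fun ω => Z i ω ^ 2) μ := by
    intro i
    refine Integrable.mono' (integrable_const ((ℓ / pmin) ^ 2))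
      ((hmeasZ i).pow_const 2).aestronglyMeasurable ?_
    filter_upwards [hZbd i] with ω h
    rw [Real.norm_eq_abs, abs_pow]
    gcongr
  -- second moment of Z
  have hEZ2 : ∀ i, ∫ ω, Z i ω ^ 2 ∂μ ≤ ℓ ^ 2 / pmin := by
    intro i
    have hindepL2B : IndepFun (fun ω => L i ω ^ 2) (B i) μ :=
      (hLB i).comp (measurable_id.pow_const 2) measurable_id
    have hL2B : ∫ ω, L i ω ^ 2 * B i ω ∂μ = (∫ ω, L i ω ^ 2 ∂μ) * p i := by
      have h := hindepL2B.integral_mul_eq_mul_integral (hL2int i).aestronglyMeasurable (hBint i).aestronglyMeasurable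
      calc ∫ ω, L i ω ^ 2 * B i ω ∂μ
          = integral μ ((fun ω => L i ω ^ 2) * B i) := rfl
        _ = integral μ (fun ω => L i ω ^ 2) * integral μ (B i) := h
        _ = (∫ ω, L i ω ^ 2 ∂μ) * p i := by rw [← hEB i]
    have hcongr : ∫ ω, Z i ω ^ 2 ∂μ = ∫ ω, ((p i)⁻¹)^2 * (L i ω ^ 2 * B i ω) ∂μ := by
      apply integral_congr_ae
      filter_upwards [hB01 i] with ω h
      rw [hZdef]
      rcases h with h | h <;> simp [h] <;> ring
    have hL2le : ∫ ω, L i ω ^ 2 ∂μ ≤ ℓ ^ 2 := by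
      have h : ∫ ω, L i ω ^ 2 ∂μ ≤ ∫ _ω, ℓ ^ 2 ∂μ := by
        refine integral_mono_ae (hL2int i) (integrable_const _) ?_
        filter_upwards [hℓ i] with ω h
        calc L i ω ^ 2 = |L i ω| ^ 2 := (sq_abs _).symm
          _ ≤ ℓ ^ 2 := by gcongr
      simpa using h
    have hEB2nn : 0 ≤ ∫ ω, L i ω ^ 2 ∂μ := integral_nonneg fun ω => sq_nonneg _
    rw [hcongr, integral_const_mul, hL2B]
    have heq : ((p i)⁻¹) ^ 2 * ((∫ ω, L i ω ^ 2 ∂μ) * p i) = (∫ ω, L i ω ^ 2 ∂μ) / p i := by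
      rw [div_eq_mul_inv, pow_two]
      rw [show (p i)⁻¹ * (p i)⁻¹ * ((∫ ω, L i ω ^ 2 ∂μ) * p i)
          = (∫ ω, L i ω ^ 2 ∂μ) * (p i * (p i)⁻¹) * (p i)⁻¹ from by ring]
      rw [mul_inv_cancel₀ (hp i).ne', mul_one]
    rw [heq]
    gcongr
    all_goals first | exact hple i | exact hL2le | exact sq_nonneg ℓ | exact hpminpos | positivity
  -- second moment of X
  have hvar : ∀ i, ∫ ω, X i ω ^ 2 ∂μ ≤ ℓ ^ 2 / pmin := by
    intro i
    have hexp : ∫ ω, X i ω ^ 2 ∂μ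
        = (∫ ω, Z i ω ^ 2 ∂μ) - 2 * m i * (∫ ω, Z i ω ∂μ) + m i ^ 2 := by
      have hptwise : ∀ ω, X i ω ^ 2 = Z i ω ^ 2 - 2 * m i * Z i ω + m i ^ 2 := by
        intro ω; rw [hXdef]; ring
      calc ∫ ω, X i ω ^ 2 ∂μ
          = ∫ ω, (Z i ω ^ 2 - 2 * m i * Z i ω + m i ^ 2) ∂μ := by
            exact integral_congr_ae (Filter.Eventually.of_forall hptwise)
        _ = (∫ ω, (Z i ω ^ 2 - 2 * m i * Z i ω) ∂μ) + ∫ _ω, m i ^ 2 ∂μ :=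
            integral_add ((hZ2int i).sub ((hZint i).const_mul _)) (integrable_const _)
        _ = (∫ ω, Z i ω ^ 2 ∂μ) - (∫ ω, 2 * m i * Z i ω ∂μ) + m i ^ 2 := by
            rw [integral_sub (hZ2int i) ((hZint i).const_mul _)]
            simp
        _ = (∫ ω, Z i ω ^ 2 ∂μ) - 2 * m i * (∫ ω, Z i ω ∂μ) + m i ^ 2 := by
            rw [integral_const_mul]
    rw [hexp, hEZ i]
    have := hEZ2 i
    nlinarith [sq_nonneg (m i)]
  -- independence of the X i
  have hindepX : iIndepFun X μ := by
    have h := hindep.comp (fun i (q : ℝ × ℝ) => q.1 / p i * q.2 - m i)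
      (fun i => ((measurable_fst.div_const _).mul measurable_snd).sub measurable_const)
    exact h
  -- integrability of exp(t * X i) and exp(t * sum)
  have hexpint : ∀ (t : ℝ) (i : Fin n), Integrable (fun ω => Real.exp (t * X i ω)) μ := by
    intro t i
    refine Integrable.mono' (integrable_const (Real.exp (|t| * (2 * ℓ / pmin))))
      ((hmeasX i).const_mul t).exp.aestronglyMeasurable ?_
    filter_upwards [hXbd i] with ω h
    rw [Real.norm_eq_abs, abs_of_pos (Real.exp_pos _), Real.exp_le_exp]
    calc t * X i ω ≤ |t * X i ω| := le_abs_self _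
      _ = |t| * |X i ω| := abs_mul _ _
      _ ≤ |t| * (2 * ℓ / pmin) := mul_le_mul_of_nonneg_left h (abs_nonneg t)
  have hintS : ∀ t : ℝ, Integrable (fun ω => Real.exp (t * (∑ i, X i) ω)) μ := fun t =>
    hindepX.integrable_exp_mul_sum (fun i => hmeasX i) (fun i _ => hexpint t i)
  -- mgf bound for the sum
  have hmgfS : ∀ t : ℝ, |t| * (2 * ℓ / pmin) ≤ 1 →
      mgf (∑ i, X i) μ t ≤ Real.exp ((n : ℝ) * (ℓ ^ 2 / pmin * t ^ 2)) := by
    intro t ht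
    rw [hindepX.mgf_sum (fun i => hmeasX i) Finset.univ]
    calc ∏ i, mgf (X i) μ t ≤ ∏ _i : Fin n, Real.exp (ℓ ^ 2 / pmin * t ^ 2) :=
          Finset.prod_le_prod (fun i _ => mgf_nonneg) (fun i _ =>
            mgf_le_of_bound μ (hmeasX i) (hXint i) (hX2int i) (hEX i) (hXbd i) (hvar i)
              (by positivity) ht)
      _ = Real.exp (ℓ ^ 2 / pmin * t ^ 2) ^ n := by
          rw [Finset.prod_const, Finset.card_univ, Fintype.card_fin]
      _ = Real.exp ((n : ℝ) * (ℓ ^ 2 / pmin * t ^ 2)) := by rw [← Real.exp_nat_mul]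
  -- the Chernoff parameter
  set t0 : ℝ := γ * μL * pmin / (2 * n * ℓ ^ 2) with ht0def
  have ht0nn : 0 ≤ t0 :=
    div_nonneg (mul_nonneg (mul_nonneg hγ0 hμLpos.le) hpminpos.le) (by positivity)
  have hγμLle : γ * μL ≤ (n : ℝ) * ℓ := by nlinarith
  have ht0M : |t0| * (2 * ℓ / pmin) ≤ 1 := by
    rw [abs_of_nonneg ht0nn, ht0def]
    have heq : γ * μL * pmin / (2 * (n : ℝ) * ℓ ^ 2) * (2 * ℓ / pmin) = γ * μL / ((n : ℝ) * ℓ) := by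
      field_simp
    rw [heq, div_le_one (by positivity)]
    exact hγμLle
  have hexpid : -t0 * (γ * μL) + (n : ℝ) * (ℓ ^ 2 / pmin * t0 ^ 2)
      = -(pmin * μL ^ 2 * γ ^ 2) / (4 * ℓ ^ 2 * n) := by
    rw [ht0def]
    field_simp
    ring
  -- upper tail
  have hup : (μ {ω | γ * μL ≤ (∑ i, X i) ω}).toReal
      ≤ Real.exp (-(pmin * μL ^ 2 * γ ^ 2) / (4 * ℓ ^ 2 * n)) := by
    have h := measure_ge_le_exp_mul_mgf (μ := μ) (X := ∑ i, X i) (γ * μL) ht0nn (hintS t0)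
    refine h.trans ?_
    calc Real.exp (-t0 * (γ * μL)) * mgf (∑ i, X i) μ t0
        ≤ Real.exp (-t0 * (γ * μL)) * Real.exp ((n : ℝ) * (ℓ ^ 2 / pmin * t0 ^ 2)) :=
          mul_le_mul_of_nonneg_left (hmgfS t0 ht0M) (Real.exp_pos _).le
      _ = Real.exp (-t0 * (γ * μL) + (n : ℝ) * (ℓ ^ 2 / pmin * t0 ^ 2)) := (Real.exp_add _ _).symm
      _ = Real.exp (-(pmin * μL ^ 2 * γ ^ 2) / (4 * ℓ ^ 2 * n)) := by rw [hexpid]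
  -- lower tail
  have hlow : (μ {ω | (∑ i, X i) ω ≤ -(γ * μL)}).toReal
      ≤ Real.exp (-(pmin * μL ^ 2 * γ ^ 2) / (4 * ℓ ^ 2 * n)) := by
    have h := measure_le_le_exp_mul_mgf (μ := μ) (X := ∑ i, X i) (-(γ * μL))
      (neg_nonpos.mpr ht0nn) (hintS (-t0))
    refine h.trans ?_
    have habs : |(-t0)| * (2 * ℓ / pmin) ≤ 1 := by rwa [abs_neg]
    calc Real.exp (-(-t0) * -(γ * μL)) * mgf (∑ i, X i) μ (-t0)
        ≤ Real.exp (-(-t0) * -(γ * μL)) * Real.exp ((n : ℝ) * (ℓ ^ 2 / pmin * (-t0) ^ 2)) :=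
          mul_le_mul_of_nonneg_left (hmgfS (-t0) habs) (Real.exp_pos _).le
      _ = Real.exp (-(-t0) * -(γ * μL) + (n : ℝ) * (ℓ ^ 2 / pmin * (-t0) ^ 2)) :=
          (Real.exp_add _ _).symm
      _ = Real.exp (-(pmin * μL ^ 2 * γ ^ 2) / (4 * ℓ ^ 2 * n)) := by
          rw [← hexpid]
          congr 1
          ring
  -- event inclusion
  have hsub : {ω | γ ≤ |(∑ i, (L i ω / p i) * B i ω) / μL - 1|}
      ⊆ {ω | γ * μL ≤ (∑ i, X i) ω} ∪ {ω | (∑ i, X i) ω ≤ -(γ * μL)} := by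
    intro ω hω
    simp only [Set.mem_setOf_eq, Set.mem_union] at hω ⊢
    have hXsum : (∑ i, X i) ω = (∑ i, L i ω / p i * B i ω) - μL := by
      rw [Finset.sum_apply]
      simp only [hXdef, hZdef]
      rw [Finset.sum_sub_distrib, hsum_m]
    have h1 : γ * μL ≤ |(∑ i, L i ω / p i * B i ω) - μL| := by
      have h2 := mul_le_mul_of_nonneg_right hω hμLpos.le
      have h3 : (∑ i, L i ω / p i * B i ω) / μL - 1
          = ((∑ i, L i ω / p i * B i ω) - μL) / μL := by field_simp
      rw [h3, abs_div, abs_of_pos hμLpos, div_mul_cancel₀ _ hμLpos.ne'] at h2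
      exact h2
    rcases le_abs.mp h1 with h | h
    · left; rw [hXsum]; linarith
    · right; rw [hXsum]; linarith
  -- conclusion
  have hup' : μ {ω | γ * μL ≤ (∑ i, X i) ω}
      ≤ ENNReal.ofReal (Real.exp (-(pmin * μL ^ 2 * γ ^ 2) / (4 * ℓ ^ 2 * n))) :=
    (ENNReal.le_ofReal_iff_toReal_le (measure_ne_top μ _) (Real.exp_nonneg _)).mpr hup
  have hlow' : μ {ω | (∑ i, X i) ω ≤ -(γ * μL)}
      ≤ ENNReal.ofReal (Real.exp (-(pmin * μL ^ 2 * γ ^ 2) / (4 * ℓ ^ 2 * n))) :=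
    (ENNReal.le_ofReal_iff_toReal_le (measure_ne_top μ _) (Real.exp_nonneg _)).mpr hlow
  have hfinal : 2 * Real.exp (-(pmin * μL ^ 2 * γ ^ 2) / (4 * ℓ ^ 2 * n))
      ≤ 4 * Real.exp (-(pmin * μL ^ 2 * γ ^ 2) / (5 * ℓ ^ 2 * n)) := by
    have hKnn : 0 ≤ pmin * μL ^ 2 * γ ^ 2 := by positivity
    have hle : -(pmin * μL ^ 2 * γ ^ 2) / (4 * ℓ ^ 2 * n)
        ≤ -(pmin * μL ^ 2 * γ ^ 2) / (5 * ℓ ^ 2 * n) := by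
      have h5 : (0:ℝ) < 4 * ℓ ^ 2 * n := by positivity
      have h7 : (pmin * μL ^ 2 * γ ^ 2) / (5 * ℓ ^ 2 * n)
          ≤ (pmin * μL ^ 2 * γ ^ 2) / (4 * ℓ ^ 2 * n) := by
        rw [div_le_div_iff₀ (by positivity) h5]
        nlinarith [sq_nonneg ℓ]
      rw [neg_div, neg_div]
      exact neg_le_neg h7
    have h1 := Real.exp_le_exp.mpr hle
    nlinarith [Real.exp_pos (-(pmin * μL ^ 2 * γ ^ 2) / (5 * ℓ ^ 2 * n))]
  calc μ {ω | γ ≤ |(∑ i, (L i ω / p i) * B i ω) / μL - 1|}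
      ≤ μ ({ω | γ * μL ≤ (∑ i, X i) ω} ∪ {ω | (∑ i, X i) ω ≤ -(γ * μL)}) := measure_mono hsub
    _ ≤ μ {ω | γ * μL ≤ (∑ i, X i) ω} + μ {ω | (∑ i, X i) ω ≤ -(γ * μL)} := measure_union_le _ _
    _ ≤ ENNReal.ofReal (Real.exp (-(pmin * μL ^ 2 * γ ^ 2) / (4 * ℓ ^ 2 * n)))
        + ENNReal.ofReal (Real.exp (-(pmin * μL ^ 2 * γ ^ 2) / (4 * ℓ ^ 2 * n))) :=
        add_le_add hup' hlow'
    _ = ENNReal.ofReal (2 * Real.exp (-(pmin * μL ^ 2 * γ ^ 2) / (4 * ℓ ^ 2 * n))) := by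
        rw [← ENNReal.ofReal_add (Real.exp_nonneg _) (Real.exp_nonneg _)]
        congr 1
        ring
    _ ≤ ENNReal.ofReal (4 * Real.exp (-(pmin * μL ^ 2 * γ ^ 2) / (5 * ℓ ^ 2 * n))) :=
        ENNReal.ofReal_le_ofReal hfinal
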